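/- For every β ∈ ℝ^p, both log PL and log P̃L are twice differentiable at β and the Hessian matrices (matrices of second partial derivatives) satisfy ‖∇²[log PL(β)] − ∇²[log P̃L(β)]‖ ≤ 2 K² · exp(4 K ‖β‖) · Σ_{m=1}^n |J_m|³ (|J_m| − 1) / |𝒥_m|, where ‖·‖ on matrices denotes the operator (spectral) norm. -/

import Mathlib

set_option maxHeartbeats 2000000

open Finset

namespace MCAux
set_option maxHeartbeats 1000000
open scoped RealInnerProductSpace

set_option linter.unusedSectionVars false
variable {T : Type*} [Fintype T] [DecidableEq T]

noncomputable def wsum (A : Finset T) (W f : T → ℝ) : ℝ := ∑ t ∈ A, W t * f t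

noncomputable def wmean (A : Finset T) (W Y : T → ℝ) : ℝ := wsum A W Y / wsum A W 1

noncomputable def wvar (A : Finset T) (W Y : T → ℝ) : ℝ :=
  wmean A W (fun t => Y t ^ 2) - (wmean A W Y) ^ 2

variable {W Y : T → ℝ} {A : Finset T}

lemma wsum_one_pos (hW : ∀ t, 0 < W t) (hA : A.Nonempty) : 0 < wsum A W 1 := by
  refine Finset.sum_pos (fun t _ => by simpa using hW t) hA

lemma wsum_nonneg (hW : ∀ t, 0 < W t) {f : T → ℝ} (hf : ∀ t, 0 ≤ f t) :
    0 ≤ wsum A W f :=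
  Finset.sum_nonneg fun t _ => mul_nonneg (hW t).le (hf t)

lemma wsum_le (hW : ∀ t, 0 < W t) {f : T → ℝ} {B : ℝ} (hf : ∀ t, f t ≤ B) :
    wsum A W f ≤ B * wsum A W 1 := by
  rw [wsum, wsum, mul_sum]
  exact Finset.sum_le_sum fun t _ => by
    have := hW t
    simpa [mul_comm] using (mul_le_mul_of_nonneg_left (hf t) (hW t).le)

lemma abs_wmean_le (hW : ∀ t, 0 < W t) (hA : A.Nonempty) {M : ℝ}
    (hY : ∀ t, |Y t| ≤ M) : |wmean A W Y| ≤ M := by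
  have hZ := wsum_one_pos hW hA
  rw [wmean, abs_div, abs_of_pos hZ, div_le_iff₀ hZ]
  calc |wsum A W Y| ≤ wsum A W (fun t => |Y t|) := by
        refine (Finset.abs_sum_le_sum_abs _ _).trans ?_
        refine Finset.sum_le_sum fun t _ => ?_
        rw [abs_mul, abs_of_pos (hW t)]
      _ ≤ M * wsum A W 1 := wsum_le hW fun t => hY t

lemma wvar_shift (hW : ∀ t, 0 < W t) (hA : A.Nonempty) (c : ℝ) :
    wvar A W Y = wmean A W (fun t => (Y t - c) ^ 2) - (wmean A W Y - c) ^ 2 := by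
  have hZ := wsum_one_pos hW hA
  have hexp : wsum A W (fun t => (Y t - c) ^ 2)
      = wsum A W (fun t => Y t ^ 2) - 2 * c * wsum A W Y + c ^ 2 * wsum A W 1 := by
    simp only [wsum, Pi.one_apply, Finset.mul_sum, ← Finset.sum_sub_distrib,
      ← Finset.sum_add_distrib]
    exact Finset.sum_congr rfl fun t _ => by ring
  rw [wvar, wmean, wmean, wmean, hexp]
  field_simp
  ring

/-- Comparing weighted means of a nonnegative bounded function over `A` and over `univ`. -/
lemma wmean_compare (hW : ∀ t, 0 < W t) (hA : A.Nonempty) {g : T → ℝ} {B : ℝ}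
    (hg0 : ∀ t, 0 ≤ g t) (hgB : ∀ t, g t ≤ B) :
    |wmean A W g - wmean univ W g| ≤ B * (wsum Aᶜ W 1 / wsum univ W 1) := by
  have hZA := wsum_one_pos hW hA
  have hZT := wsum_one_pos hW (hA.mono (subset_univ A))
  have hZC : 0 ≤ wsum Aᶜ W 1 := wsum_nonneg hW (fun t => by norm_num)
  have hsplitg : ∀ f : T → ℝ, wsum univ W f = wsum A W f + wsum Aᶜ W f := by
    intro f; rw [wsum, wsum, wsum, Finset.sum_add_sum_compl]
  have hSA0 : 0 ≤ wsum A W g := wsum_nonneg hW hg0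
  have hSC0 : 0 ≤ wsum Aᶜ W g := wsum_nonneg hW hg0
  have hSA : wsum A W g ≤ B * wsum A W 1 := wsum_le hW hgB
  have hSC : wsum Aᶜ W g ≤ B * wsum Aᶜ W 1 := wsum_le hW hgB
  have hZsplit := hsplitg 1
  have hgsplit := hsplitg g
  have hrw : wmean A W g - wmean univ W g
      = (wsum A W g * wsum Aᶜ W 1 - wsum A W 1 * wsum Aᶜ W g)
        / (wsum A W 1 * wsum univ W 1) := by
    rw [wmean, wmean, div_sub_div _ _ hZA.ne' hZT.ne']
    congr 1
    rw [hgsplit, hZsplit]; ring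
  rw [hrw, abs_div, abs_of_pos (mul_pos hZA hZT), div_le_iff₀ (mul_pos hZA hZT)]
  have htarget : B * (wsum Aᶜ W 1 / wsum univ W 1) * (wsum A W 1 * wsum univ W 1)
      = B * wsum Aᶜ W 1 * wsum A W 1 := by
    field_simp
  rw [htarget, abs_le]
  constructor
  · nlinarith
  · nlinarith

/-- Core comparison: conditioned vs full weighted variance. -/
lemma wvar_compare (hW : ∀ t, 0 < W t) (hA : A.Nonempty) {M : ℝ}
    (hY : ∀ t, |Y t| ≤ M) :
    |wvar A W Y - wvar univ W Y| ≤ 4 * M ^ 2 * (wsum Aᶜ W 1 / wsum univ W 1) := by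
  have hT : (univ : Finset T).Nonempty := hA.mono (subset_univ A)
  have hM : 0 ≤ M := le_trans (abs_nonneg _) (hY hA.choose)
  have hbd : ∀ c : ℝ, |c| ≤ M → (∀ t, 0 ≤ (Y t - c)^2) ∧ (∀ t, (Y t - c)^2 ≤ 4 * M^2) := by
    intro c hc
    refine ⟨fun t => sq_nonneg _, fun t => ?_⟩
    have h1 : |Y t - c| ≤ 2 * M := by
      calc |Y t - c| ≤ |Y t| + |c| := abs_sub _ _
        _ ≤ 2 * M := by linarith [hY t]
    calc (Y t - c)^2 = |Y t - c|^2 := (sq_abs _).symm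
      _ ≤ (2*M)^2 := by exact pow_le_pow_left₀ (abs_nonneg _) h1 2
      _ = 4 * M^2 := by ring
  rw [abs_sub_le_iff]
  constructor
  · -- wvar A - wvar univ ≤ ...
    set c := wmean univ W Y with hc
    have hcM : |c| ≤ M := abs_wmean_le hW hT hY
    obtain ⟨hg0, hgB⟩ := hbd c hcM
    have h1 : wvar A W Y ≤ wmean A W (fun t => (Y t - c)^2) := by
      rw [wvar_shift hW hA c]; nlinarith [sq_nonneg (wmean A W Y - c)]
    have h2 : wvar univ W Y = wmean univ W (fun t => (Y t - c)^2) := by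
      rw [wvar_shift hW hT c]; simp [hc]
    have h3 := wmean_compare hW hA hg0 hgB
    have := abs_le.1 h3
    linarith [this.2]
  · set c := wmean A W Y with hc
    have hcM : |c| ≤ M := abs_wmean_le hW hA hY
    obtain ⟨hg0, hgB⟩ := hbd c hcM
    have h1 : wvar univ W Y ≤ wmean univ W (fun t => (Y t - c)^2) := by
      rw [wvar_shift hW hT c]; nlinarith [sq_nonneg (wmean univ W Y - c)]
    have h2 : wvar A W Y = wmean A W (fun t => (Y t - c)^2) := by
      rw [wvar_shift hW hA c]; simp [hc]
    have h3 := wmean_compare hW hA hg0 hgB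
    have := abs_le.1 h3
    linarith [this.1]


variable {ι : Type*} [Fintype ι] (w y : ι → ℝ)

lemma sum_tuple_succ {k : ℕ} (G : (Fin (k+1) → ι) → ℝ) :
    ∑ t : Fin (k+1) → ι, G t
      = ∑ j : ι, ∑ s : Fin k → ι, G (Fin.cons (α := fun _ => ι) j s) := by
  rw [← (Fin.consEquiv (fun _ : Fin (k+1) => ι)).sum_comp G]
  rw [Fintype.sum_prod_type]
  rfl

lemma tuple_T0 (k : ℕ) :
    ∑ t : Fin k → ι, ∏ i, w (t i) = (∑ j, w j) ^ k := by
  induction k with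
  | zero => simp
  | succ k ih =>
    rw [sum_tuple_succ]
    have hstep : ∀ j : ι, ∀ s : Fin k → ι,
        ∏ i, w (Fin.cons (α := fun _ => ι) j s i) = w j * ∏ i, w (s i) := by
      intro j s; rw [Fin.prod_univ_succ]; simp
    simp_rw [hstep]
    rw [← Finset.sum_mul_sum, ih, pow_succ]
    ring

lemma tuple_T1 (k : ℕ) :
    (∑ t : Fin k → ι, (∏ i, w (t i)) * (∑ i, y (t i))) * (∑ j, w j)
      = (k : ℝ) * (∑ j, w j) ^ k * (∑ j, w j * y j) := by
  induction k with
  | zero => simp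
  | succ k ih =>
    rw [sum_tuple_succ]
    have hstep : ∀ j : ι,
        (∑ s : Fin k → ι, (∏ i, w (Fin.cons (α := fun _ => ι) j s i))
            * (∑ i, y (Fin.cons (α := fun _ => ι) j s i)))
        = (w j * y j) * ((∑ j, w j) ^ k)
          + w j * (∑ s : Fin k → ι, (∏ i, w (s i)) * (∑ i, y (s i))) := by
      intro j
      have h1 : ∀ s : Fin k → ι,
          (∏ i, w (Fin.cons (α := fun _ => ι) j s i))
            * (∑ i, y (Fin.cons (α := fun _ => ι) j s i))
          = (w j * y j) * (∏ i, w (s i)) + w j * ((∏ i, w (s i)) * (∑ i, y (s i))) := by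
        intro s
        rw [Fin.prod_univ_succ, Fin.sum_univ_succ, Fin.cons_zero]
        simp only [Fin.cons_succ]
        ring
      simp_rw [h1]
      rw [Finset.sum_add_distrib, ← Finset.mul_sum, ← Finset.mul_sum, tuple_T0]
    simp_rw [hstep]
    rw [Finset.sum_add_distrib, ← Finset.sum_mul, ← Finset.sum_mul]
    push_cast
    linear_combination (∑ j, w j) * ih

lemma tuple_T2 (k : ℕ) :
    (∑ t : Fin k → ι, (∏ i, w (t i)) * (∑ i, y (t i)) ^ 2) * (∑ j, w j) ^ 2
      = (k : ℝ) * (∑ j, w j) ^ (k+1) * (∑ j, w j * y j ^ 2)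
        + (k : ℝ) * ((k : ℝ) - 1) * (∑ j, w j) ^ k * (∑ j, w j * y j) ^ 2 := by
  induction k with
  | zero => simp
  | succ k ih =>
    rw [sum_tuple_succ]
    have hstep : ∀ j : ι,
        (∑ s : Fin k → ι, (∏ i, w (Fin.cons (α := fun _ => ι) j s i))
            * (∑ i, y (Fin.cons (α := fun _ => ι) j s i)) ^ 2)
        = (w j * y j ^ 2) * ((∑ j, w j) ^ k)
          + (w j * y j) * (2 * ∑ s : Fin k → ι, (∏ i, w (s i)) * (∑ i, y (s i)))
          + w j * (∑ s : Fin k → ι, (∏ i, w (s i)) * (∑ i, y (s i)) ^ 2) := by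
      intro j
      have h1 : ∀ s : Fin k → ι,
          (∏ i, w (Fin.cons (α := fun _ => ι) j s i))
            * (∑ i, y (Fin.cons (α := fun _ => ι) j s i)) ^ 2
          = (w j * y j ^ 2) * (∏ i, w (s i))
            + (w j * y j) * (2 * ((∏ i, w (s i)) * (∑ i, y (s i))))
            + w j * ((∏ i, w (s i)) * (∑ i, y (s i)) ^ 2) := by
        intro s
        rw [Fin.prod_univ_succ, Fin.sum_univ_succ, Fin.cons_zero]
        simp only [Fin.cons_succ]
        ring
      simp_rw [h1]
      rw [Finset.sum_add_distrib, Finset.sum_add_distrib, ← Finset.mul_sum, ← Finset.mul_sum,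
        ← Finset.mul_sum, tuple_T0, ← Finset.mul_sum]
    simp_rw [hstep]
    rw [Finset.sum_add_distrib, Finset.sum_add_distrib, ← Finset.sum_mul, ← Finset.sum_mul,
      ← Finset.sum_mul]
    push_cast
    linear_combination (2 * (∑ j, w j * y j) * (∑ j, w j)) * tuple_T1 w y k
      + (∑ j, w j) * ih


variable {ι : Type*} [Fintype ι] [DecidableEq ι]

lemma fiber_card (k : ℕ) (S : Finset ι) (hS : S.card = k) :
    ((univ.filter (fun t : Fin k → ι => Function.Injective t)).filter
      (fun t => Finset.image t univ = S)).card = Nat.factorial k := by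
  rw [Finset.filter_filter]
  have hcard : Fintype.card (Fin k ↪ {a : ι // a ∈ S}) = Nat.factorial k := by
    rw [Fintype.card_embedding_eq]
    simp only [Fintype.card_coe, hS, Fintype.card_fin, Nat.descFactorial_self]
  rw [← hcard, ← Finset.card_univ]
  refine Finset.card_bij' (i := fun t ht => ?_) (j := fun e _ => fun i => (e i : ι))
    ?_ ?_ ?_ ?_
  · -- construct embedding from t
    refine ⟨fun i => ⟨t i, ?_⟩, fun a b hab => (Finset.mem_filter.1 ht).2.1 ?_⟩
    · have := (Finset.mem_filter.1 ht).2.2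
      rw [← this]
      exact Finset.mem_image_of_mem t (mem_univ i)
    · exact congrArg Subtype.val hab
  · intro a ha; exact mem_univ _
  · intro e _
    have hinj : Function.Injective (fun i => (e i : ι)) :=
      Subtype.coe_injective.comp e.injective
    refine Finset.mem_filter.2 ⟨mem_univ _, hinj, ?_⟩
    refine Finset.eq_of_subset_of_card_le ?_ ?_
    · intro a ha
      obtain ⟨i, -, rfl⟩ := Finset.mem_image.1 ha
      exact (e i).2
    · rw [Finset.card_image_of_injective _ hinj, Finset.card_univ, Fintype.card_fin, hS]
  · intro a ha; rfl
  · intro e he; ext i; rfl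

lemma sum_inj_eq (k : ℕ) (g : Finset ι → ℝ) :
    ∑ t ∈ univ.filter (fun t : Fin k → ι => Function.Injective t), g (Finset.image t univ)
      = (Nat.factorial k : ℝ) * ∑ S ∈ Finset.powersetCard k univ, g S := by
  have hmap : ∀ t ∈ univ.filter (fun t : Fin k → ι => Function.Injective t),
      Finset.image t univ ∈ Finset.powersetCard k univ := by
    intro t ht
    refine Finset.mem_powersetCard.2 ⟨Finset.subset_univ _, ?_⟩
    rw [Finset.card_image_of_injective _ (Finset.mem_filter.1 ht).2, Finset.card_univ,
      Fintype.card_fin]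
  rw [← Finset.sum_fiberwise_of_maps_to hmap (fun t => g (Finset.image t univ)),
    Finset.mul_sum]
  refine Finset.sum_congr rfl fun S hS => ?_
  obtain ⟨-, hSk⟩ := Finset.mem_powersetCard.1 hS
  have hconst : ∀ t ∈ (univ.filter (fun t : Fin k → ι => Function.Injective t)).filter
      (fun t => Finset.image t univ = S), g (Finset.image t univ) = g S := by
    intro t ht; rw [(Finset.mem_filter.1 ht).2]
  rw [Finset.sum_congr rfl hconst, Finset.sum_const, fiber_card k S hSk, nsmul_eq_mul]

/-- covering bound -/
lemma sum_le_cover {α γ : Type*} [Fintype α] (P : Finset γ) (pred : γ → α → Prop)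
    [∀ q a, Decidable (pred q a)] (A : Finset α) (f : α → ℝ) (hf : ∀ a, 0 ≤ f a)
    (hcov : ∀ a ∈ A, ∃ q ∈ P, pred q a) :
    ∑ a ∈ A, f a ≤ ∑ q ∈ P, ∑ a ∈ univ.filter (pred q), f a := by
  have h1 : ∑ a ∈ A, f a ≤ ∑ a ∈ A, (∑ q ∈ P, if pred q a then f a else 0) := by
    refine Finset.sum_le_sum fun a ha => ?_
    obtain ⟨q, hq, hpq⟩ := hcov a ha
    calc f a = if pred q a then f a else 0 := by rw [if_pos hpq]
      _ ≤ ∑ q ∈ P, if pred q a then f a else 0 :=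
        Finset.single_le_sum (f := fun q' => if pred q' a then f a else 0)
          (fun q' _ => by by_cases h : pred q' a <;> simp [h, hf a]) hq
  refine h1.trans ?_
  have h2 : ∑ a ∈ A, (∑ q ∈ P, if pred q a then f a else 0)
      ≤ ∑ a ∈ univ, (∑ q ∈ P, if pred q a then f a else 0) := by
    refine Finset.sum_le_sum_of_subset_of_nonneg (Finset.subset_univ A) ?_
    intro a _ _
    refine Finset.sum_nonneg fun q _ => by by_cases h : pred q a <;> simp [h, hf a]
  refine h2.trans ?_
  rw [Finset.sum_comm]
  refine le_of_eq (Finset.sum_congr rfl fun q _ => ?_)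
  rw [Finset.sum_filter]

lemma collision_pair (k : ℕ) (i i' : Fin k) (hne : i ≠ i') (w : ι → ℝ) :
    (∑ t ∈ univ.filter (fun t : Fin k → ι => t i = t i'), ∏ l, w (t l)) * (∑ j, w j)
      = ∑ s : Fin k → ι, (∏ l, w (s l)) * w (s i) := by
  rw [Finset.sum_mul_sum]
  rw [← Finset.sum_product']
  refine Finset.sum_nbij' (i := fun q => Function.update q.1 i' q.2)
    (j := fun s => (Function.update s i' (s i), s i')) ?_ ?_ ?_ ?_ ?_
  · intro q _; exact mem_univ _
  · intro s _
    refine Finset.mem_product.2 ⟨Finset.mem_filter.2 ⟨mem_univ _, ?_⟩, mem_univ _⟩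
    show Function.update s i' (s i) i = Function.update s i' (s i) i'
    rw [Function.update_of_ne hne, Function.update_self]
  · intro q hq
    have hq1 : q.1 i = q.1 i' := (Finset.mem_filter.1 (Finset.mem_product.1 hq).1).2
    have e1 : Function.update q.1 i' q.2 i = q.1 i := Function.update_of_ne hne _ _
    ext
    · simp only [e1, Function.update_idem, hq1, Function.update_eq_self]
    · simp only [Function.update_self]
  · intro s _
    simp only [Function.update_self, Function.update_idem, Function.update_eq_self]
  · intro q hq
    have hq1 : q.1 i = q.1 i' := (Finset.mem_filter.1 (Finset.mem_product.1 hq).1).2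
    have h1 : ∏ l, w (Function.update q.1 i' q.2 l)
        = w q.2 * ∏ l ∈ univ.erase i', w (q.1 l) := by
      have hcomp : (fun l => w (Function.update q.1 i' q.2 l))
          = Function.update (fun l => w (q.1 l)) i' (w q.2) := by
        funext l
        by_cases h : l = i'
        · subst h; rw [Function.update_self, Function.update_self]
        · rw [Function.update_of_ne h, Function.update_of_ne h]
      rw [hcomp, Finset.prod_update_of_mem (mem_univ i'), Finset.erase_eq]
    have h2 : ∏ l, w (q.1 l) = w (q.1 i') * ∏ l ∈ univ.erase i', w (q.1 l) :=
      (Finset.mul_prod_erase univ _ (mem_univ i')).symm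
    have h3 : Function.update q.1 i' q.2 i = q.1 i := Function.update_of_ne hne _ _
    rw [h1, h2, h3, hq1]
    ring

lemma card_lt_pairs (k : ℕ) :
    2 * ((univ.filter (fun q : Fin k × Fin k => q.1 < q.2)).card : ℝ)
      = (k : ℝ) ^ 2 - k := by
  have hD : (univ.filter (fun q : Fin k × Fin k => q.1 ≠ q.2)) = Finset.offDiag univ := by
    ext q; simp [Finset.mem_offDiag]
  have hsplit : (univ.filter (fun q : Fin k × Fin k => q.1 ≠ q.2))
      = (univ.filter (fun q : Fin k × Fin k => q.1 < q.2))
        ∪ (univ.filter (fun q : Fin k × Fin k => q.2 < q.1)) := by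
    ext q
    simp only [Finset.mem_filter, Finset.mem_union, mem_univ, true_and]
    constructor
    · intro h; exact lt_or_gt_of_ne h
    · intro h; rcases h with h | h
      · exact ne_of_lt h
      · exact (ne_of_lt h).symm
  have hdisj : Disjoint (univ.filter (fun q : Fin k × Fin k => q.1 < q.2))
      (univ.filter (fun q : Fin k × Fin k => q.2 < q.1)) := by
    refine Finset.disjoint_left.2 fun q hq1 hq2 => ?_
    have h1 := (Finset.mem_filter.1 hq1).2
    have h2 := (Finset.mem_filter.1 hq2).2
    exact absurd (h1.trans h2) (lt_irrefl _)
  have hPP' : (univ.filter (fun q : Fin k × Fin k => q.1 < q.2)).card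
      = (univ.filter (fun q : Fin k × Fin k => q.2 < q.1)).card := by
    refine Finset.card_nbij' (fun q => (q.2, q.1)) (fun q => (q.2, q.1)) ?_ ?_ ?_ ?_ <;>
      simp [Finset.mem_filter, Set.MapsTo, Set.LeftInvOn]
  have hcard : (univ.filter (fun q : Fin k × Fin k => q.1 < q.2)).card
      + (univ.filter (fun q : Fin k × Fin k => q.2 < q.1)).card = k * k - k := by
    rw [← Finset.card_union_of_disjoint hdisj, ← hsplit, hD, Finset.offDiag_card,
      Finset.card_univ, Fintype.card_fin]
  have hk : k ≤ k * k := by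
    cases k with
    | zero => simp
    | succ m => exact Nat.le_mul_of_pos_left _ (Nat.succ_pos m)
  have : ((univ.filter (fun q : Fin k × Fin k => q.1 < q.2)).card
      + (univ.filter (fun q : Fin k × Fin k => q.2 < q.1)).card : ℝ) = (k:ℝ)*k - k := by
    rw [← Nat.cast_add, hcard, Nat.cast_sub hk]
    push_cast
    ring
  rw [← hPP'] at this
  linarith [this]


lemma noninj_bound {ι : Type*} [Fintype ι] [DecidableEq ι] [Nonempty ι] (k : ℕ)
    (w : ι → ℝ) (hw : ∀ j, 0 < w j) {wmax : ℝ} (hmax : ∀ j, w j ≤ wmax) :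
    (∑ t ∈ univ.filter (fun t : Fin k → ι => ¬ Function.Injective t), ∏ l, w (t l))
        * (∑ j, w j)
      ≤ ((k:ℝ) * ((k:ℝ) - 1) / 2) * wmax * (∑ j, w j) ^ k := by
  have hS0 : 0 < ∑ j, w j := Finset.sum_pos (fun j _ => hw j) univ_nonempty
  have hprod : ∀ t : Fin k → ι, 0 ≤ ∏ l, w (t l) :=
    fun t => Finset.prod_nonneg fun l _ => (hw _).le
  have hwmax : 0 < wmax := lt_of_lt_of_le (hw (Classical.arbitrary ι)) (hmax _)
  set P := univ.filter (fun q : Fin k × Fin k => q.1 < q.2) with hP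
  have hcov : ∀ t ∈ univ.filter (fun t : Fin k → ι => ¬ Function.Injective t),
      ∃ q ∈ P, t q.1 = t q.2 := by
    intro t ht
    have hni := (Finset.mem_filter.1 ht).2
    rw [Function.not_injective_iff] at hni
    obtain ⟨a, b, hab, hne⟩ := hni
    rcases lt_or_gt_of_ne hne with h | h
    · exact ⟨(a, b), Finset.mem_filter.2 ⟨mem_univ _, h⟩, hab⟩
    · exact ⟨(b, a), Finset.mem_filter.2 ⟨mem_univ _, h⟩, hab.symm⟩
  have h1 := sum_le_cover P (fun q (t : Fin k → ι) => t q.1 = t q.2) _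
    (fun t => ∏ l, w (t l)) hprod hcov
  have h2 := mul_le_mul_of_nonneg_right h1 hS0.le
  refine h2.trans ?_
  rw [Finset.sum_mul]
  have h3 : ∀ q ∈ P, (∑ t ∈ univ.filter (fun t : Fin k → ι => t q.1 = t q.2),
      ∏ l, w (t l)) * (∑ j, w j) ≤ wmax * (∑ j, w j) ^ k := by
    intro q hq
    have hne : q.1 ≠ q.2 := ne_of_lt (Finset.mem_filter.1 hq).2
    rw [collision_pair k q.1 q.2 hne w]
    calc ∑ s : Fin k → ι, (∏ l, w (s l)) * w (s q.1)
        ≤ ∑ s : Fin k → ι, (∏ l, w (s l)) * wmax :=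
          Finset.sum_le_sum fun s _ => mul_le_mul_of_nonneg_left (hmax _) (hprod s)
      _ = wmax * (∑ j, w j) ^ k := by rw [← Finset.sum_mul, tuple_T0]; ring
  calc ∑ q ∈ P, (∑ t ∈ univ.filter (fun t : Fin k → ι => t q.1 = t q.2),
        ∏ l, w (t l)) * (∑ j, w j)
      ≤ ∑ _q ∈ P, wmax * (∑ j, w j) ^ k := Finset.sum_le_sum h3
    _ = (P.card : ℝ) * (wmax * (∑ j, w j) ^ k) := by rw [Finset.sum_const, nsmul_eq_mul]
    _ = ((k:ℝ) * ((k:ℝ) - 1) / 2) * wmax * (∑ j, w j) ^ k := by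
        have := card_lt_pairs k
        have hPc : (P.card : ℝ) = ((k:ℝ)^2 - k) / 2 := by rw [hP]; linarith [this]
        rw [hPc]; ring


variable {pp : ℕ} {σ : Type*} [Fintype σ]

local notation "E" => EuclideanSpace ℝ (Fin pp)

noncomputable def Zf (A : Finset σ) (V : σ → E) (b : E) : ℝ :=
  ∑ s ∈ A, Real.exp ⟪b, V s⟫

noncomputable def Phi (A : Finset σ) (V : σ → E) (b : E) : ℝ := Real.log (Zf A V b)

noncomputable def Dphi (A : Finset σ) (V : σ → E) (b : E) : E →L[ℝ] ℝ :=
  (Zf A V b)⁻¹ • ∑ s ∈ A, Real.exp ⟪b, V s⟫ • (innerSL ℝ (V s))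

lemma Zf_pos {A : Finset σ} (hA : A.Nonempty) (V : σ → E) (b : E) : 0 < Zf A V b :=
  Finset.sum_pos (fun s _ => Real.exp_pos _) hA

lemma hasFDerivAt_inner_right (v b : E) :
    HasFDerivAt (fun b : E => ⟪b, v⟫) (innerSL ℝ v) b := by
  have h : (fun b : E => ⟪b, v⟫) = fun b : E => (innerSL ℝ v) b := by
    funext b
    simp only [innerSL_apply_apply]
    exact real_inner_comm v b
  rw [h]
  exact (innerSL ℝ v).hasFDerivAt

lemma hasFDerivAt_Zf (A : Finset σ) (V : σ → E) (b : E) :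
    HasFDerivAt (Zf A V) (∑ s ∈ A, Real.exp ⟪b, V s⟫ • innerSL ℝ (V s)) b :=
  HasFDerivAt.fun_sum fun s _ => (hasFDerivAt_inner_right (V s) b).exp

lemma hasFDerivAt_Phi {A : Finset σ} (hA : A.Nonempty) (V : σ → E) (b : E) :
    HasFDerivAt (Phi A V) (Dphi A V b) b := by
  have h := (hasFDerivAt_Zf A V b).log (Zf_pos hA V b).ne'
  exact h

lemma Dphi_apply (A : Finset σ) (V : σ → E) (b e : E) :
    Dphi A V b e = (Zf A V b)⁻¹ * ∑ s ∈ A, Real.exp ⟪b, V s⟫ * ⟪V s, e⟫ := by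
  simp [Dphi, ContinuousLinearMap.sum_apply, Finset.mul_sum]

noncomputable def hessQ (A : Finset σ) (V : σ → E) (b : E) (e e' : E) : ℝ :=
  (Zf A V b)⁻¹ * (∑ s ∈ A, Real.exp ⟪b, V s⟫ * (⟪V s, e⟫ * ⟪V s, e'⟫))
    - ((Zf A V b)⁻¹ * ∑ s ∈ A, Real.exp ⟪b, V s⟫ * ⟪V s, e⟫)
      * ((Zf A V b)⁻¹ * ∑ s ∈ A, Real.exp ⟪b, V s⟫ * ⟪V s, e'⟫)

lemma hasFDerivAt_Dphi_apply {A : Finset σ} (hA : A.Nonempty) (V : σ → E) (e' β : E) :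
    ∃ L : EuclideanSpace ℝ (Fin pp) →L[ℝ] ℝ,
      HasFDerivAt (fun b => Dphi A V b e') L β ∧ ∀ e, L e = hessQ A V β e e' := by
  classical
  have hZpos := Zf_pos hA V β
  have hZ' := hasFDerivAt_Zf A V β
  have hNder : HasFDerivAt (fun b => ∑ s ∈ A, Real.exp ⟪b, V s⟫ * ⟪V s, e'⟫)
      (∑ s ∈ A, ⟪V s, e'⟫ • (Real.exp ⟪β, V s⟫ • innerSL ℝ (V s))) β :=
    HasFDerivAt.fun_sum fun s _ => ((hasFDerivAt_inner_right (V s) β).exp).mul_const _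
  have hinv : HasFDerivAt (fun b => (Zf A V b)⁻¹)
      ((ContinuousLinearMap.smulRight (1 : ℝ →L[ℝ] ℝ) (-(Zf A V β ^ 2)⁻¹)).comp
        (∑ s ∈ A, Real.exp ⟪β, V s⟫ • innerSL ℝ (V s))) β := by
    have h := (hasFDerivAt_inv hZpos.ne').comp β hZ'
    rw [ContinuousLinearMap.smulRight_one_eq_toSpanSingleton]; exact h
  have hmul := hinv.mul hNder
  have hfun : (fun b => Dphi A V b e')
      = fun b => (Zf A V b)⁻¹ * ∑ s ∈ A, Real.exp ⟪b, V s⟫ * ⟪V s, e'⟫ := by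
    funext b; rw [Dphi_apply]
  have hder : HasFDerivAt (fun b => Dphi A V b e')
      ((Zf A V β)⁻¹ • ∑ s ∈ A, ⟪V s, e'⟫ • Real.exp ⟪β, V s⟫ • innerSL ℝ (V s) +
        (∑ s ∈ A, Real.exp ⟪β, V s⟫ * ⟪V s, e'⟫) •
          (ContinuousLinearMap.smulRight (1 : ℝ →L[ℝ] ℝ) (-(Zf A V β ^ 2)⁻¹)).comp
            (∑ s ∈ A, Real.exp ⟪β, V s⟫ • innerSL ℝ (V s))) β := by
    rw [hfun]; exact hmul
  refine ⟨_, hder, fun e => ?_⟩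
  simp only [ContinuousLinearMap.add_apply, ContinuousLinearMap.smul_apply,
    ContinuousLinearMap.sum_apply, ContinuousLinearMap.coe_comp', Function.comp_apply,
    ContinuousLinearMap.smulRight_apply, ContinuousLinearMap.one_apply, innerSL_apply_apply,
    smul_eq_mul, hessQ]
  rw [Finset.sum_congr rfl (fun s _ => by ring :
    ∀ s ∈ A, ⟪V s, e'⟫ * (Real.exp ⟪β, V s⟫ * ⟪V s, e⟫)
      = Real.exp ⟪β, V s⟫ * (⟪V s, e⟫ * ⟪V s, e'⟫))]
  rw [sq, mul_inv]
  ring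

section PerM

theorem per_m_bound {ι : Type*} [Fintype ι] [DecidableEq ι] [Nonempty ι]
    (x : ι → E) (K : ℝ) (hK : 0 ≤ K) (hx : ∀ j, ‖x j‖ ≤ K)
    (Jm : Finset ι) (hJm : Jm.Nonempty) (β u : E) :
    |hessQ (Finset.powersetCard Jm.card (univ : Finset ι)) (fun S => ∑ j ∈ S, x j) β u u
        - (Jm.card : ℝ) * hessQ (univ : Finset ι) x β u u|
      ≤ 2 * K ^ 2 * Real.exp (4 * K * ‖β‖)
          * ((Jm.card : ℝ) ^ 3 * ((Jm.card : ℝ) - 1) / (Fintype.card ι : ℝ)) * ‖u‖ ^ 2 := by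
  classical
  set k := Jm.card with hk
  have hk1 : 1 ≤ k := Finset.card_pos.2 hJm
  set w : ι → ℝ := fun j => Real.exp ⟪β, x j⟫ with hwdef
  set y : ι → ℝ := fun j => ⟪x j, u⟫ with hydef
  have hwpos : ∀ j, 0 < w j := fun j => Real.exp_pos _
  set Wt : (Fin k → ι) → ℝ := fun t => ∏ i, w (t i) with hWtdef
  set Yt : (Fin k → ι) → ℝ := fun t => ∑ i, y (t i) with hYtdef
  have hWtpos : ∀ t, 0 < Wt t := fun t => Finset.prod_pos fun i _ => hwpos _
  set Inj := univ.filter (fun t : Fin k → ι => Function.Injective t) with hInjdef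
  have hInjne : Inj.Nonempty := by
    refine ⟨fun i => (Jm.equivFin.symm i : ι), Finset.mem_filter.2 ⟨mem_univ _, ?_⟩⟩
    exact Subtype.coe_injective.comp (Equiv.injective _)
  have hS0pos : 0 < ∑ j, w j := Finset.sum_pos (fun j _ => hwpos j) univ_nonempty
  -- bounds on w
  have hinner : ∀ j, |⟪β, x j⟫| ≤ K * ‖β‖ := by
    intro j
    refine (abs_real_inner_le_norm β (x j)).trans ?_
    calc ‖β‖ * ‖x j‖ ≤ ‖β‖ * K := mul_le_mul_of_nonneg_left (hx j) (norm_nonneg β)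
      _ = K * ‖β‖ := mul_comm _ _
  have hwub : ∀ j, w j ≤ Real.exp (K * ‖β‖) := fun j =>
    Real.exp_le_exp.2 ((le_abs_self _).trans (hinner j))
  have hwlb : ∀ j, Real.exp (-(K * ‖β‖)) ≤ w j := fun j =>
    Real.exp_le_exp.2 (neg_le_of_abs_le (hinner j))
  -- Claim B : PL side equals wvar over injective tuples
  have herS : ∀ S : Finset ι, Real.exp ⟪β, (∑ j ∈ S, x j : E)⟫ = ∏ j ∈ S, w j := by
    intro S; rw [inner_sum, Real.exp_sum]
  have hyrS : ∀ S : Finset ι, ⟪(∑ j ∈ S, x j : E), u⟫ = ∑ j ∈ S, y j := by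
    intro S; rw [sum_inner]
  have himg : ∀ t : Fin k → ι, t ∈ Inj →
      (∏ j ∈ Finset.image t univ, w j = Wt t ∧ ∑ j ∈ Finset.image t univ, y j = Yt t) := by
    intro t ht
    have hinj := (Finset.mem_filter.1 ht).2
    constructor
    · exact Finset.prod_image fun a _ b _ h => hinj h
    · exact Finset.sum_image fun a _ b _ h => hinj h
  have hfact : (Nat.factorial k : ℝ) ≠ 0 := Nat.cast_ne_zero.2 (Nat.factorial_ne_zero k)
  have hB : hessQ (Finset.powersetCard k (univ : Finset ι)) (fun S => ∑ j ∈ S, x j) β u u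
      = wvar Inj Wt Yt := by
    have h0 : wsum Inj Wt 1
        = (Nat.factorial k : ℝ) * ∑ S ∈ Finset.powersetCard k univ, ∏ j ∈ S, w j := by
      rw [wsum, ← sum_inj_eq k (fun S => ∏ j ∈ S, w j)]
      exact Finset.sum_congr rfl fun t ht => by rw [(himg t ht).1, Pi.one_apply, mul_one]
    have h1 : wsum Inj Wt Yt
        = (Nat.factorial k : ℝ) * ∑ S ∈ Finset.powersetCard k univ,
            (∏ j ∈ S, w j) * (∑ j ∈ S, y j) := by
      rw [wsum, ← sum_inj_eq k (fun S => (∏ j ∈ S, w j) * (∑ j ∈ S, y j))]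
      exact Finset.sum_congr rfl fun t ht => by rw [(himg t ht).1, (himg t ht).2]
    have h2 : wsum Inj Wt (fun t => Yt t ^ 2)
        = (Nat.factorial k : ℝ) * ∑ S ∈ Finset.powersetCard k univ,
            (∏ j ∈ S, w j) * (∑ j ∈ S, y j) ^ 2 := by
      rw [wsum, ← sum_inj_eq k (fun S => (∏ j ∈ S, w j) * (∑ j ∈ S, y j) ^ 2)]
      exact Finset.sum_congr rfl fun t ht => by rw [(himg t ht).1, (himg t ht).2]
    have hZ : Zf (Finset.powersetCard k (univ : Finset ι)) (fun S => ∑ j ∈ S, x j) β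
        = ∑ S ∈ Finset.powersetCard k univ, ∏ j ∈ S, w j := by
      rw [Zf]; exact Finset.sum_congr rfl fun S _ => herS S
    have hQ1 : ∑ S ∈ Finset.powersetCard k univ,
        Real.exp ⟪β, ((fun S => ∑ j ∈ S, x j) S : E)⟫ * ⟪((fun S => ∑ j ∈ S, x j) S : E), u⟫
        = ∑ S ∈ Finset.powersetCard k univ, (∏ j ∈ S, w j) * (∑ j ∈ S, y j) :=
      Finset.sum_congr rfl fun S _ => by rw [herS S, hyrS S]
    have hQ2 : ∑ S ∈ Finset.powersetCard k univ,
        Real.exp ⟪β, ((fun S => ∑ j ∈ S, x j) S : E)⟫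
          * (⟪((fun S => ∑ j ∈ S, x j) S : E), u⟫ * ⟪((fun S => ∑ j ∈ S, x j) S : E), u⟫)
        = ∑ S ∈ Finset.powersetCard k univ, (∏ j ∈ S, w j) * (∑ j ∈ S, y j) ^ 2 :=
      Finset.sum_congr rfl fun S _ => by rw [herS S, hyrS S]; ring
    rw [hessQ, hZ, hQ1, hQ2, wvar, wmean, wmean, h0, h1, h2,
      mul_div_mul_left _ _ hfact, mul_div_mul_left _ _ hfact]
    rw [inv_mul_eq_div, inv_mul_eq_div]
    ring
  -- Claim A : tilde side equals wvar over all tuples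
  have hT0 : wsum (univ : Finset (Fin k → ι)) Wt 1 = (∑ j, w j) ^ k := by
    rw [wsum, ← tuple_T0 w k]
    exact Finset.sum_congr rfl fun t _ => by rw [Pi.one_apply, mul_one]
  have hA : (k : ℝ) * hessQ (univ : Finset ι) x β u u = wvar (univ : Finset (Fin k → ι)) Wt Yt := by
    have hT1 := tuple_T1 w y k
    have hT2 := tuple_T2 w y k
    have hA1 : wsum (univ : Finset (Fin k → ι)) Wt Yt
        = (k : ℝ) * (∑ j, w j) ^ k * (∑ j, w j * y j) / (∑ j, w j) := by
      rw [eq_div_iff hS0pos.ne']; exact hT1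
    have hA2 : wsum (univ : Finset (Fin k → ι)) Wt (fun t => Yt t ^ 2)
        = ((k : ℝ) * (∑ j, w j) ^ (k+1) * (∑ j, w j * y j ^ 2)
            + (k : ℝ) * ((k : ℝ) - 1) * (∑ j, w j) ^ k * (∑ j, w j * y j) ^ 2)
          / (∑ j, w j) ^ 2 := by
      rw [eq_div_iff (pow_ne_zero 2 hS0pos.ne')]; exact hT2
    have hZu : Zf (univ : Finset ι) x β = ∑ j, w j := rfl
    have hq1 : ∑ s, Real.exp ⟪β, x s⟫ * ⟪x s, u⟫ = ∑ j, w j * y j := rfl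
    have hq2 : ∑ s, Real.exp ⟪β, x s⟫ * (⟪x s, u⟫ * ⟪x s, u⟫) = ∑ j, w j * y j ^ 2 :=
      Finset.sum_congr rfl fun s _ => by rw [hwdef, hydef]; ring
    rw [hessQ, hZu, hq1, hq2, wvar, wmean, wmean, hT0, hA1, hA2]
    have hS0k : (∑ j, w j) ^ k ≠ 0 := pow_ne_zero _ hS0pos.ne'
    field_simp
    ring
  -- Core comparison
  set M : ℝ := (k : ℝ) * (K * ‖u‖) with hMdef
  have hYb : ∀ t, |Yt t| ≤ M := by
    intro t
    calc |Yt t| ≤ ∑ i, |y (t i)| := Finset.abs_sum_le_sum_abs _ _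
      _ ≤ ∑ _i : Fin k, K * ‖u‖ := by
          refine Finset.sum_le_sum fun i _ => ?_
          calc |y (t i)| ≤ ‖x (t i)‖ * ‖u‖ := abs_real_inner_le_norm _ _
            _ ≤ K * ‖u‖ := mul_le_mul_of_nonneg_right (hx _) (norm_nonneg u)
      _ = M := by rw [Finset.sum_const, Finset.card_univ, Fintype.card_fin, nsmul_eq_mul]
  have hcore := wvar_compare hWtpos hInjne hYb
  -- delta bound
  have hcompl : Injᶜ = univ.filter (fun t : Fin k → ι => ¬ Function.Injective t) := by
    rw [hInjdef, Finset.compl_filter]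
  have hnon := noninj_bound (ι := ι) k w hwpos hwub
  have hdelta : wsum Injᶜ Wt 1 / wsum (univ : Finset (Fin k → ι)) Wt 1
      ≤ ((k : ℝ) * ((k : ℝ) - 1) / 2) * Real.exp (K * ‖β‖) / (∑ j, w j) := by
    rw [hT0, hcompl]
    have hnum : wsum (univ.filter (fun t : Fin k → ι => ¬ Function.Injective t)) Wt 1
        = ∑ t ∈ univ.filter (fun t : Fin k → ι => ¬ Function.Injective t), ∏ l, w (t l) := by
      rw [wsum]; exact Finset.sum_congr rfl fun t _ => by rw [Pi.one_apply, mul_one]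
    rw [hnum, div_le_div_iff₀ (pow_pos hS0pos k) hS0pos]
    linarith [hnon]
  -- S0 lower bound
  have hN1 : (1 : ℝ) ≤ (Fintype.card ι : ℝ) := by
    exact_mod_cast Fintype.card_pos
  have hS0lb : (Fintype.card ι : ℝ) * Real.exp (-(K * ‖β‖)) ≤ ∑ j, w j := by
    calc (Fintype.card ι : ℝ) * Real.exp (-(K * ‖β‖))
        = ∑ _j : ι, Real.exp (-(K * ‖β‖)) := by
          rw [Finset.sum_const, Finset.card_univ, nsmul_eq_mul]
      _ ≤ ∑ j, w j := Finset.sum_le_sum fun j _ => hwlb j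
  -- combine
  have hend : |wvar Inj Wt Yt - wvar (univ : Finset (Fin k → ι)) Wt Yt|
      ≤ 2 * K ^ 2 * Real.exp (4 * K * ‖β‖)
          * ((k : ℝ) ^ 3 * ((k : ℝ) - 1) / (Fintype.card ι : ℝ)) * ‖u‖ ^ 2 := by
    refine hcore.trans ?_
    have hstep1 : wsum Injᶜ Wt 1 / wsum (univ : Finset (Fin k → ι)) Wt 1
        ≤ ((k : ℝ) * ((k : ℝ) - 1) / 2) * Real.exp (2 * (K * ‖β‖)) / (Fintype.card ι : ℝ) := by
      refine hdelta.trans ?_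
      have hpos1 : (0:ℝ) < (Fintype.card ι : ℝ) * Real.exp (-(K * ‖β‖)) :=
        mul_pos (lt_of_lt_of_le one_pos hN1) (Real.exp_pos _)
      have hC : (0:ℝ) ≤ (k : ℝ) * ((k : ℝ) - 1) / 2 * Real.exp (K * ‖β‖) := by
        have : (1:ℝ) ≤ (k:ℝ) := by exact_mod_cast hk1
        have h2 : (0:ℝ) ≤ (k:ℝ) * ((k:ℝ) - 1) := by nlinarith
        positivity
      calc ((k : ℝ) * ((k : ℝ) - 1) / 2) * Real.exp (K * ‖β‖) / (∑ j, w j)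
          ≤ ((k : ℝ) * ((k : ℝ) - 1) / 2) * Real.exp (K * ‖β‖)
              / ((Fintype.card ι : ℝ) * Real.exp (-(K * ‖β‖))) := by
            exact div_le_div_of_nonneg_left hC hpos1 hS0lb
        _ = ((k : ℝ) * ((k : ℝ) - 1) / 2) * Real.exp (2 * (K * ‖β‖)) / (Fintype.card ι : ℝ) := by
            have hh : Real.exp (2 * (K * ‖β‖)) = Real.exp (K * ‖β‖) * Real.exp (K * ‖β‖) := by
              rw [← Real.exp_add]; ring_nf
            rw [Real.exp_neg, hh,
              div_eq_div_iff (ne_of_gt (by positivity)) (ne_of_gt (lt_of_lt_of_le one_pos hN1))]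
            field_simp
    have hM2 : 4 * M ^ 2 * (wsum Injᶜ Wt 1 / wsum (univ : Finset (Fin k → ι)) Wt 1)
        ≤ 4 * M ^ 2 * (((k : ℝ) * ((k : ℝ) - 1) / 2) * Real.exp (2 * (K * ‖β‖))
            / (Fintype.card ι : ℝ)) :=
      mul_le_mul_of_nonneg_left hstep1 (by positivity)
    refine hM2.trans ?_
    have hexp : Real.exp (2 * (K * ‖β‖)) ≤ Real.exp (4 * K * ‖β‖) := by
      refine Real.exp_le_exp.2 ?_
      nlinarith [norm_nonneg β, hK, mul_nonneg hK (norm_nonneg β)]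
    have hkk : (1:ℝ) ≤ (k:ℝ) := by exact_mod_cast hk1
    rw [hMdef]
    have hfac : (0:ℝ) ≤ 4 * ((k : ℝ) * (K * ‖u‖)) ^ 2 * (((k : ℝ) * ((k : ℝ) - 1) / 2)
        / (Fintype.card ι : ℝ)) := by
      have h2 : (0:ℝ) ≤ (k:ℝ) * ((k:ℝ) - 1) := by nlinarith
      positivity
    calc 4 * ((k : ℝ) * (K * ‖u‖)) ^ 2 * (((k : ℝ) * ((k : ℝ) - 1) / 2)
            * Real.exp (2 * (K * ‖β‖)) / (Fintype.card ι : ℝ))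
        ≤ 4 * ((k : ℝ) * (K * ‖u‖)) ^ 2 * (((k : ℝ) * ((k : ℝ) - 1) / 2)
            * Real.exp (4 * K * ‖β‖) / (Fintype.card ι : ℝ)) := by
          have h2 : (0:ℝ) ≤ (k:ℝ) * ((k:ℝ) - 1) := by nlinarith
          have := mul_le_mul_of_nonneg_left hexp
            (mul_nonneg (by positivity : (0:ℝ) ≤ 4 * ((k : ℝ) * (K * ‖u‖)) ^ 2)
              (by positivity : (0:ℝ) ≤ (k : ℝ) * ((k : ℝ) - 1) / 2))
          calc 4 * ((k : ℝ) * (K * ‖u‖)) ^ 2 * (((k : ℝ) * ((k : ℝ) - 1) / 2)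
              * Real.exp (2 * (K * ‖β‖)) / (Fintype.card ι : ℝ))
              = (4 * ((k : ℝ) * (K * ‖u‖)) ^ 2 * ((k : ℝ) * ((k : ℝ) - 1) / 2))
                * Real.exp (2 * (K * ‖β‖)) / (Fintype.card ι : ℝ) := by ring
            _ ≤ (4 * ((k : ℝ) * (K * ‖u‖)) ^ 2 * ((k : ℝ) * ((k : ℝ) - 1) / 2))
                * Real.exp (4 * K * ‖β‖) / (Fintype.card ι : ℝ) := by
                have hNpos : (0:ℝ) < (Fintype.card ι : ℝ) := lt_of_lt_of_le one_pos hN1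
                exact div_le_div_of_nonneg_right this hNpos.le |>.trans_eq rfl
            _ = 4 * ((k : ℝ) * (K * ‖u‖)) ^ 2 * (((k : ℝ) * ((k : ℝ) - 1) / 2)
                * Real.exp (4 * K * ‖β‖) / (Fintype.card ι : ℝ)) := by ring
      _ = 2 * K ^ 2 * Real.exp (4 * K * ‖β‖)
            * ((k : ℝ) ^ 3 * ((k : ℝ) - 1) / (Fintype.card ι : ℝ)) * ‖u‖ ^ 2 := by
          ring
  rw [hB, hA]
  exact hend

end PerM

-- bilinearity & symmetry of hessQ, smoothness of Phi
section Bilin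
variable {σ : Type*} [Fintype σ]

lemma hessQ_symm (A : Finset σ) (V : σ → E) (β e e' : E) :
    hessQ A V β e e' = hessQ A V β e' e := by
  rw [hessQ, hessQ]
  rw [Finset.sum_congr rfl (fun s _ => by ring :
    ∀ s ∈ A, Real.exp ⟪β, V s⟫ * (⟪V s, e⟫ * ⟪V s, e'⟫)
      = Real.exp ⟪β, V s⟫ * (⟪V s, e'⟫ * ⟪V s, e⟫))]
  ring

lemma sum_coord_inner (v a : E) :
    ∑ i, a i * ⟪v, EuclideanSpace.single i (1:ℝ)⟫ = ⟪v, a⟫ := by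
  have h1 : ∀ i, ⟪v, EuclideanSpace.single i (1:ℝ)⟫ = v i := fun i => by
    simp [EuclideanSpace.inner_single_right]
  have h2 : ⟪v, a⟫ = ∑ i, v i * a i := by
    simp [PiLp.inner_apply, RCLike.inner_apply]; exact Finset.sum_congr rfl fun i _ => mul_comm _ _
  simp_rw [h1, h2]
  exact Finset.sum_congr rfl fun i _ => mul_comm _ _

lemma sum_coord_apply_sum (A : Finset σ) (V : σ → E) (c : σ → ℝ) (a : E) :
    ∑ i, a i * (∑ s ∈ A, c s * ⟪V s, EuclideanSpace.single i (1:ℝ)⟫)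
      = ∑ s ∈ A, c s * ⟪V s, a⟫ := by
  have h : ∀ i, a i * (∑ s ∈ A, c s * ⟪V s, EuclideanSpace.single i (1:ℝ)⟫)
      = ∑ s ∈ A, c s * (a i * ⟪V s, EuclideanSpace.single i (1:ℝ)⟫) := fun i => by
    rw [Finset.mul_sum]; exact Finset.sum_congr rfl fun s _ => by ring
  simp_rw [h]
  rw [Finset.sum_comm]
  refine Finset.sum_congr rfl fun s _ => ?_
  rw [← Finset.mul_sum]
  have := sum_coord_inner (V s) a
  rw [this]

lemma double_coord_sum (A : Finset σ) (V : σ → E) (c : σ → ℝ) (a b : E) :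
    ∑ i, ∑ i', a i * b i'
        * (∑ s ∈ A, c s * (⟪V s, EuclideanSpace.single i (1:ℝ)⟫
            * ⟪V s, EuclideanSpace.single i' (1:ℝ)⟫))
      = ∑ s ∈ A, c s * (⟪V s, a⟫ * ⟪V s, b⟫) := by
  have hinner : ∀ i, ∑ i', a i * b i'
      * (∑ s ∈ A, c s * (⟪V s, EuclideanSpace.single i (1:ℝ)⟫
          * ⟪V s, EuclideanSpace.single i' (1:ℝ)⟫))
      = a i * ∑ s ∈ A, (c s * ⟪V s, EuclideanSpace.single i (1:ℝ)⟫) * ⟪V s, b⟫ := by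
    intro i
    have h1 : ∀ i', a i * b i'
        * (∑ s ∈ A, c s * (⟪V s, EuclideanSpace.single i (1:ℝ)⟫
            * ⟪V s, EuclideanSpace.single i' (1:ℝ)⟫))
        = a i * (b i' * (∑ s ∈ A, (c s * ⟪V s, EuclideanSpace.single i (1:ℝ)⟫)
            * ⟪V s, EuclideanSpace.single i' (1:ℝ)⟫)) := by
      intro i'
      rw [Finset.sum_congr rfl (fun s _ => by ring :
        ∀ s ∈ A, c s * (⟪V s, EuclideanSpace.single i (1:ℝ)⟫
            * ⟪V s, EuclideanSpace.single i' (1:ℝ)⟫)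
          = (c s * ⟪V s, EuclideanSpace.single i (1:ℝ)⟫)
            * ⟪V s, EuclideanSpace.single i' (1:ℝ)⟫)]
      ring
    simp_rw [h1]
    rw [← Finset.mul_sum,
      sum_coord_apply_sum A V (fun s => c s * ⟪V s, EuclideanSpace.single i (1:ℝ)⟫) b]
  simp_rw [hinner]
  have h2 : ∀ i, a i * ∑ s ∈ A, (c s * ⟪V s, EuclideanSpace.single i (1:ℝ)⟫) * ⟪V s, b⟫
      = a i * ∑ s ∈ A, (c s * ⟪V s, b⟫) * ⟪V s, EuclideanSpace.single i (1:ℝ)⟫ := by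
    intro i
    rw [Finset.sum_congr rfl (fun s _ => by ring :
      ∀ s ∈ A, (c s * ⟪V s, EuclideanSpace.single i (1:ℝ)⟫) * ⟪V s, b⟫
        = (c s * ⟪V s, b⟫) * ⟪V s, EuclideanSpace.single i (1:ℝ)⟫)]
  simp_rw [h2]
  rw [sum_coord_apply_sum A V (fun s => c s * ⟪V s, b⟫) a]
  exact Finset.sum_congr rfl fun s _ => by ring

lemma sum_coord_P (A : Finset σ) (V : σ → E) (β a : E) :
    ∑ i, a i * ((Zf A V β)⁻¹ * ∑ s ∈ A, Real.exp ⟪β, V s⟫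
        * ⟪V s, EuclideanSpace.single i (1:ℝ)⟫)
      = (Zf A V β)⁻¹ * ∑ s ∈ A, Real.exp ⟪β, V s⟫ * ⟪V s, a⟫ := by
  have h : ∀ i, a i * ((Zf A V β)⁻¹ * ∑ s ∈ A, Real.exp ⟪β, V s⟫
      * ⟪V s, EuclideanSpace.single i (1:ℝ)⟫)
      = (Zf A V β)⁻¹ * (a i * ∑ s ∈ A, Real.exp ⟪β, V s⟫
          * ⟪V s, EuclideanSpace.single i (1:ℝ)⟫) := fun i => by ring
  simp_rw [h]
  rw [← Finset.mul_sum, sum_coord_apply_sum A V (fun s => Real.exp ⟪β, V s⟫) a]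

lemma hessQ_bilinear (A : Finset σ) (V : σ → E) (β a b : E) :
    ∑ i, ∑ i', a i * b i' * hessQ A V β (EuclideanSpace.single i (1:ℝ))
        (EuclideanSpace.single i' (1:ℝ))
      = hessQ A V β a b := by
  simp only [hessQ]
  simp only [mul_sub, Finset.sum_sub_distrib]
  congr 1
  · -- first part
    have h : ∀ i i', a i * b i' * ((Zf A V β)⁻¹
        * ∑ s ∈ A, Real.exp ⟪β, V s⟫ * (⟪V s, EuclideanSpace.single i (1:ℝ)⟫
            * ⟪V s, EuclideanSpace.single i' (1:ℝ)⟫))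
        = (Zf A V β)⁻¹ * (a i * b i'
            * ∑ s ∈ A, Real.exp ⟪β, V s⟫ * (⟪V s, EuclideanSpace.single i (1:ℝ)⟫
                * ⟪V s, EuclideanSpace.single i' (1:ℝ)⟫)) := fun i i' => by ring
    simp_rw [h, ← Finset.mul_sum]
    rw [double_coord_sum A V (fun s => Real.exp ⟪β, V s⟫) a b]
  · -- second part
    have h : ∀ i i', a i * b i'
        * (((Zf A V β)⁻¹ * ∑ s ∈ A, Real.exp ⟪β, V s⟫
              * ⟪V s, EuclideanSpace.single i (1:ℝ)⟫)
          * ((Zf A V β)⁻¹ * ∑ s ∈ A, Real.exp ⟪β, V s⟫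
              * ⟪V s, EuclideanSpace.single i' (1:ℝ)⟫))
        = (a i * ((Zf A V β)⁻¹ * ∑ s ∈ A, Real.exp ⟪β, V s⟫
              * ⟪V s, EuclideanSpace.single i (1:ℝ)⟫))
          * (b i' * ((Zf A V β)⁻¹ * ∑ s ∈ A, Real.exp ⟪β, V s⟫
              * ⟪V s, EuclideanSpace.single i' (1:ℝ)⟫)) := fun i i' => by ring
    simp_rw [h]
    rw [← Finset.sum_mul_sum]
    rw [sum_coord_P A V β a, sum_coord_P A V β b]

lemma contDiff_inner_right (v : E) : ContDiff ℝ 2 fun b : E => ⟪b, v⟫ := by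
  have h : (fun b : E => ⟪b, v⟫) = fun b : E => (innerSL ℝ v) b := by
    funext b; simp only [innerSL_apply_apply]; exact real_inner_comm v b
  rw [h]; exact (innerSL ℝ v).contDiff

lemma contDiff_Phi {A : Finset σ} (hA : A.Nonempty) (V : σ → E) :
    ContDiff ℝ 2 (Phi A V) := by
  refine ContDiff.log ?_ (fun b => (Zf_pos hA V b).ne')
  exact ContDiff.sum fun s _ => Real.contDiff_exp.comp (contDiff_inner_right (V s))

end Bilin
end MCAux

open Finset MCAux


open scoped RealInnerProductSpace BigOperators

/-- The operator (spectral) norm of a real `p × p` matrix, i.e. the operator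
norm of the associated linear map on Euclidean space. -/
noncomputable def matrixOpNorm {p : ℕ} (M : Matrix (Fin p) (Fin p) ℝ) : ℝ :=
  ‖LinearMap.toContinuousLinearMap (Matrix.toEuclideanLin M)‖

/-- The Hessian matrix (matrix of second partial derivatives) of
`f : ℝ^p → ℝ` at `β`. -/
noncomputable def hessianMatrix {p : ℕ} (f : EuclideanSpace ℝ (Fin p) → ℝ)
    (β : EuclideanSpace ℝ (Fin p)) : Matrix (Fin p) (Fin p) ℝ :=
  Matrix.of fun i i' =>
    fderiv ℝ (fun b => fderiv ℝ f b (EuclideanSpace.single i' 1)) β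
      (EuclideanSpace.single i 1)

/-- With bounded covariates `‖x_m(j)‖ ≤ K`, the exact multicast log partial
likelihood and its duplication approximation are twice differentiable at every
`β`, and their Hessian matrices differ (in operator/spectral norm) by at most
`2K²·exp(4K‖β‖)·Σ_m |J_m|³(|J_m|−1)/|𝒥_m|`. -/
theorem hessian_logPL_approx_bound
    {p n : ℕ} (K : ℝ) (hK : 0 ≤ K)
    {J : Fin n → Type*} [∀ m, Fintype (J m)] [∀ m, Nonempty (J m)]
    (x : (m : Fin n) → J m → EuclideanSpace ℝ (Fin p))
    (hx : ∀ m j, ‖x m j‖ ≤ K)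
    (Jm : (m : Fin n) → Finset (J m)) (hJm : ∀ m, (Jm m).Nonempty)
    (logPL logPLtilde : EuclideanSpace ℝ (Fin p) → ℝ)
    (hPL : logPL = fun β =>
      ∑ m, ((∑ j ∈ Jm m, ⟪β, x m j⟫) -
        Real.log (∑ S ∈ Finset.powersetCard (Jm m).card (Finset.univ : Finset (J m)),
          Real.exp (∑ j ∈ S, ⟪β, x m j⟫))))
    (hPLt : logPLtilde = fun β =>
      ∑ m, ((∑ j ∈ Jm m, ⟪β, x m j⟫) -
        ((Jm m).card : ℝ) * Real.log (∑ j, Real.exp ⟪β, x m j⟫))) :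
    ∀ β : EuclideanSpace ℝ (Fin p),
      DifferentiableAt ℝ logPL β ∧ DifferentiableAt ℝ (fderiv ℝ logPL) β ∧
      DifferentiableAt ℝ logPLtilde β ∧ DifferentiableAt ℝ (fderiv ℝ logPLtilde) β ∧
      matrixOpNorm (hessianMatrix logPL β - hessianMatrix logPLtilde β)
        ≤ 2 * K ^ 2 * Real.exp (4 * K * ‖β‖) *
            ∑ m, ((Jm m).card : ℝ) ^ 3 * (((Jm m).card : ℝ) - 1)
              / (Fintype.card (J m) : ℝ) := by
  classical
  intro β
  -- linear parts as CLMs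
  set Lm : Fin n → (EuclideanSpace ℝ (Fin p) →L[ℝ] ℝ) :=
    fun m => ∑ j ∈ Jm m, innerSL ℝ (x m j) with hLmdef
  have hLmApply : ∀ m (b : EuclideanSpace ℝ (Fin p)), Lm m b = ∑ j ∈ Jm m, ⟪b, x m j⟫ := by
    intro m b
    rw [hLmdef]
    simp only [ContinuousLinearMap.sum_apply, innerSL_apply_apply]
    exact Finset.sum_congr rfl fun j _ => (real_inner_comm _ _)
  set A1 : (m : Fin n) → Finset (Finset (J m)) :=
    fun m => Finset.powersetCard (Jm m).card univ with hA1def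
  set V1 : (m : Fin n) → Finset (J m) → EuclideanSpace ℝ (Fin p) :=
    fun m S => ∑ j ∈ S, x m j with hV1def
  have hA1ne : ∀ m, (A1 m).Nonempty := by
    intro m
    refine Finset.powersetCard_nonempty.2 ?_
    rw [Finset.card_univ]
    exact Finset.card_le_univ _
  -- rewrite the two functions
  have hPL2 : logPL = fun b => ∑ m, (Lm m b - MCAux.Phi (A1 m) (V1 m) b) := by
    rw [hPL]
    funext b
    refine Finset.sum_congr rfl fun m _ => ?_
    rw [hLmApply]
    congr 1
    rw [MCAux.Phi, MCAux.Zf]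
    congr 1
    exact Finset.sum_congr rfl fun S _ => by rw [inner_sum]
  have hPLt2 : logPLtilde
      = fun b => ∑ m, (Lm m b - ((Jm m).card : ℝ) * MCAux.Phi univ (x m) b) := by
    rw [hPLt]
    funext b
    exact Finset.sum_congr rfl fun m _ => by rw [hLmApply]; rfl
  -- smoothness
  have hCDPL : ContDiff ℝ 2 logPL := by
    rw [hPL2]
    exact ContDiff.sum fun m _ => ((Lm m).contDiff).sub (contDiff_Phi (hA1ne m) (V1 m))
  have hCDt : ContDiff ℝ 2 logPLtilde := by
    rw [hPLt2]
    exact ContDiff.sum fun m _ =>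
      ((Lm m).contDiff).sub (contDiff_const.mul (contDiff_Phi univ_nonempty (x m)))
  refine ⟨hCDPL.differentiable (by norm_num) β,
    ((hCDPL.fderiv_right (m := 1) (by norm_num)).differentiable (by norm_num)) β,
    hCDt.differentiable (by norm_num) β,
    ((hCDt.fderiv_right (m := 1) (by norm_num)).differentiable (by norm_num)) β, ?_⟩
  -- first derivatives
  have hDer : ∀ b, HasFDerivAt logPL (∑ m, (Lm m - MCAux.Dphi (A1 m) (V1 m) b)) b := by
    intro b
    rw [hPL2]
    exact HasFDerivAt.fun_sum fun m _ =>
      ((Lm m).hasFDerivAt).sub (MCAux.hasFDerivAt_Phi (hA1ne m) (V1 m) b)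
  have hDerT : ∀ b, HasFDerivAt logPLtilde
      (∑ m, (Lm m - ((Jm m).card : ℝ) • MCAux.Dphi univ (x m) b)) b := by
    intro b
    rw [hPLt2]
    exact HasFDerivAt.fun_sum fun m _ => ((Lm m).hasFDerivAt).sub
      ((MCAux.hasFDerivAt_Phi univ_nonempty (x m) b).const_mul _)
  -- second derivative entries
  have hHessPL : ∀ e e' : EuclideanSpace ℝ (Fin p),
      fderiv ℝ (fun b => fderiv ℝ logPL b e') β e
        = ∑ m, (0 - MCAux.hessQ (A1 m) (V1 m) β e e') := by
    intro e e'
    choose L hL1 hL2 using fun m => MCAux.hasFDerivAt_Dphi_apply (hA1ne m) (V1 m) e' β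
    have hfun : (fun b => fderiv ℝ logPL b e')
        = fun b => ∑ m, (Lm m e' - MCAux.Dphi (A1 m) (V1 m) b e') := by
      funext b
      rw [(hDer b).fderiv]
      simp [ContinuousLinearMap.sum_apply, ContinuousLinearMap.sub_apply]
    rw [hfun]
    have hd : HasFDerivAt (fun b => ∑ m, (Lm m e' - MCAux.Dphi (A1 m) (V1 m) b e'))
        (∑ m, ((0 : EuclideanSpace ℝ (Fin p) →L[ℝ] ℝ) - L m)) β :=
      HasFDerivAt.fun_sum fun m _ => (hasFDerivAt_const _ _).sub (hL1 m)
    rw [hd.fderiv]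
    simp [ContinuousLinearMap.sum_apply, ContinuousLinearMap.sub_apply, hL2]
  have hHessT : ∀ e e' : EuclideanSpace ℝ (Fin p),
      fderiv ℝ (fun b => fderiv ℝ logPLtilde b e') β e
        = ∑ m, (0 - ((Jm m).card : ℝ) * MCAux.hessQ univ (x m) β e e') := by
    intro e e'
    choose L hL1 hL2 using fun m => MCAux.hasFDerivAt_Dphi_apply
      (univ_nonempty : (univ : Finset (J m)).Nonempty) (x m) e' β
    have hfun : (fun b => fderiv ℝ logPLtilde b e')
        = fun b => ∑ m, (Lm m e' - ((Jm m).card : ℝ) * MCAux.Dphi univ (x m) b e') := by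
      funext b
      rw [(hDerT b).fderiv]
      simp [ContinuousLinearMap.sum_apply, ContinuousLinearMap.sub_apply,
        ContinuousLinearMap.smul_apply, smul_eq_mul]
    rw [hfun]
    have hd : HasFDerivAt
        (fun b => ∑ m, (Lm m e' - ((Jm m).card : ℝ) * MCAux.Dphi univ (x m) b e'))
        (∑ m, ((0 : EuclideanSpace ℝ (Fin p) →L[ℝ] ℝ) - ((Jm m).card : ℝ) • L m)) β :=
      HasFDerivAt.fun_sum fun m _ => (hasFDerivAt_const _ _).sub ((hL1 m).const_mul _)
    rw [hd.fderiv]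
    simp [ContinuousLinearMap.sum_apply, ContinuousLinearMap.sub_apply,
      ContinuousLinearMap.smul_apply, smul_eq_mul, hL2]
  -- the difference bilinear form
  set F : EuclideanSpace ℝ (Fin p) → EuclideanSpace ℝ (Fin p) → ℝ :=
    fun a b => ∑ m, (((Jm m).card : ℝ) * MCAux.hessQ univ (x m) β a b
      - MCAux.hessQ (A1 m) (V1 m) β a b) with hFdef
  set Mx := hessianMatrix logPL β - hessianMatrix logPLtilde β with hMxdef
  have hMxEntry : ∀ i i', Mx i i'
      = F (EuclideanSpace.single i 1) (EuclideanSpace.single i' 1) := by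
    intro i i'
    rw [hMxdef, Matrix.sub_apply, hessianMatrix, hessianMatrix, Matrix.of_apply,
      Matrix.of_apply, hHessPL, hHessT]
    simp only [hFdef]
    rw [← Finset.sum_sub_distrib]
    exact Finset.sum_congr rfl fun m _ => by ring
  set T := LinearMap.toContinuousLinearMap (Matrix.toEuclideanLin Mx) with hTdef
  have hFbilin : ∀ a b : EuclideanSpace ℝ (Fin p),
      ∑ i, ∑ i', a i * b i' * F (EuclideanSpace.single i 1) (EuclideanSpace.single i' 1)
        = F a b := by
    intro a b
    simp only [hFdef]
    have hswap : ∑ i, ∑ i', a i * b i'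
        * (∑ m, (((Jm m).card : ℝ)
            * MCAux.hessQ univ (x m) β (EuclideanSpace.single i 1) (EuclideanSpace.single i' 1)
          - MCAux.hessQ (A1 m) (V1 m) β (EuclideanSpace.single i 1)
              (EuclideanSpace.single i' 1)))
        = ∑ m, ∑ i, ∑ i', a i * b i'
            * (((Jm m).card : ℝ)
              * MCAux.hessQ univ (x m) β (EuclideanSpace.single i 1)
                  (EuclideanSpace.single i' 1)
              - MCAux.hessQ (A1 m) (V1 m) β (EuclideanSpace.single i 1)
                  (EuclideanSpace.single i' 1)) := by
      simp_rw [Finset.mul_sum]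
      rw [Finset.sum_congr rfl fun i (_ : i ∈ univ) => Finset.sum_comm, Finset.sum_comm]
    rw [hswap]
    refine Finset.sum_congr rfl fun m _ => ?_
    have e1 : ∀ i i' : Fin p, a i * b i'
        * (((Jm m).card : ℝ)
            * MCAux.hessQ univ (x m) β (EuclideanSpace.single i 1) (EuclideanSpace.single i' 1)
          - MCAux.hessQ (A1 m) (V1 m) β (EuclideanSpace.single i 1)
              (EuclideanSpace.single i' 1))
        = ((Jm m).card : ℝ) * (a i * b i' * MCAux.hessQ univ (x m) β
              (EuclideanSpace.single i 1) (EuclideanSpace.single i' 1))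
          - a i * b i' * MCAux.hessQ (A1 m) (V1 m) β (EuclideanSpace.single i 1)
              (EuclideanSpace.single i' 1) := fun i i' => by ring
    simp_rw [e1, Finset.sum_sub_distrib, ← Finset.mul_sum]
    rw [MCAux.hessQ_bilinear, MCAux.hessQ_bilinear]
  have hTapply : ∀ a c : EuclideanSpace ℝ (Fin p), ⟪a, T c⟫ = F a c := by
    intro a c
    have h2 : ∀ i, T c i = ∑ i', Mx i i' * c i' := by
      intro i
      rw [hTdef]
      simp [Matrix.toEuclideanLin_apply, Matrix.mulVec, dotProduct]
    have h1 : ⟪a, T c⟫ = ∑ i, a i * T c i := by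
      simp [PiLp.inner_apply, RCLike.inner_apply]; exact Finset.sum_congr rfl fun i _ => mul_comm _ _
    rw [h1]
    rw [Finset.sum_congr rfl (fun i (_ : i ∈ univ) => by
      rw [h2 i, Finset.mul_sum]
      exact Finset.sum_congr rfl fun i' _ => by rw [hMxEntry]; ring :
      ∀ i ∈ univ, a i * T c i
        = ∑ i', a i * c i' * F (EuclideanSpace.single i 1) (EuclideanSpace.single i' 1))]
    exact hFbilin a c
  have hFsymm : ∀ a c : EuclideanSpace ℝ (Fin p), F a c = F c a := by
    intro a c
    simp only [hFdef]
    exact Finset.sum_congr rfl fun m _ => by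
      rw [MCAux.hessQ_symm univ (x m) β a c, MCAux.hessQ_symm (A1 m) (V1 m) β a c]
  -- the constant
  set C : ℝ := 2 * K ^ 2 * Real.exp (4 * K * ‖β‖) *
      ∑ m, ((Jm m).card : ℝ) ^ 3 * (((Jm m).card : ℝ) - 1)
        / (Fintype.card (J m) : ℝ) with hCdef
  have htermnn : ∀ m : Fin n, 0 ≤ ((Jm m).card : ℝ) ^ 3 * (((Jm m).card : ℝ) - 1)
      / (Fintype.card (J m) : ℝ) := by
    intro m
    have h1 : (1:ℝ) ≤ ((Jm m).card : ℝ) := by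
      exact_mod_cast Finset.card_pos.2 (hJm m)
    have h2 : (0:ℝ) ≤ ((Jm m).card : ℝ) - 1 := by linarith
    have h3 : (0:ℝ) ≤ (Fintype.card (J m) : ℝ) := by positivity
    positivity
  have hCnn : 0 ≤ C := by
    rw [hCdef]
    refine mul_nonneg (by positivity) (Finset.sum_nonneg fun m _ => htermnn m)
  have hquad : ∀ a : EuclideanSpace ℝ (Fin p), |F a a| ≤ C * ‖a‖ ^ 2 := by
    intro a
    simp only [hFdef]
    refine (Finset.abs_sum_le_sum_abs _ _).trans ?_
    have hper : ∀ m ∈ (univ : Finset (Fin n)),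
        |((Jm m).card : ℝ) * MCAux.hessQ univ (x m) β a a
          - MCAux.hessQ (A1 m) (V1 m) β a a|
        ≤ 2 * K ^ 2 * Real.exp (4 * K * ‖β‖)
            * (((Jm m).card : ℝ) ^ 3 * (((Jm m).card : ℝ) - 1)
              / (Fintype.card (J m) : ℝ)) * ‖a‖ ^ 2 := by
      intro m _
      rw [abs_sub_comm]
      exact MCAux.per_m_bound (x m) K hK (hx m) (Jm m) (hJm m) β a
    refine (Finset.sum_le_sum hper).trans (le_of_eq ?_)
    rw [hCdef, ← Finset.sum_mul, ← Finset.mul_sum]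
  have hbil0 : ∀ a c : EuclideanSpace ℝ (Fin p),
      |⟪a, T c⟫| ≤ C / 2 * (‖a‖ ^ 2 + ‖c‖ ^ 2) := by
    intro a c
    have hcomm : ⟪c, T a⟫ = ⟪a, T c⟫ := by
      rw [hTapply, hTapply, hFsymm]
    have hpol : ⟪a, T c⟫ = (F (a + c) (a + c) - F (a - c) (a - c)) / 4 := by
      rw [← hTapply (a + c) (a + c), ← hTapply (a - c) (a - c), map_add, map_sub]
      simp only [inner_add_left, inner_add_right, inner_sub_left, inner_sub_right]
      rw [hcomm]
      ring
    rw [hpol]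
    have q1 := hquad (a + c)
    have q2 := hquad (a - c)
    have habs : |F (a + c) (a + c) - F (a - c) (a - c)|
        ≤ C * ‖a + c‖ ^ 2 + C * ‖a - c‖ ^ 2 := (abs_sub _ _).trans (add_le_add q1 q2)
    have hn1 : ‖a + c‖ ^ 2 = ‖a‖ ^ 2 + 2 * ⟪a, c⟫ + ‖c‖ ^ 2 := norm_add_sq_real a c
    have hn2 : ‖a - c‖ ^ 2 = ‖a‖ ^ 2 - 2 * ⟪a, c⟫ + ‖c‖ ^ 2 := norm_sub_sq_real a c
    rw [abs_div]
    have h4 : |(4:ℝ)| = 4 := by norm_num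
    rw [h4, div_le_iff₀ (by norm_num : (0:ℝ) < 4)]
    nlinarith [habs, hn1, hn2]
  have hbil : ∀ a c : EuclideanSpace ℝ (Fin p), |⟪a, T c⟫| ≤ C * (‖a‖ * ‖c‖) := by
    intro a c
    by_cases ha : a = 0
    · rw [ha]
      simp
    by_cases hc : c = 0
    · rw [hc]
      simp
    have hna : (0:ℝ) < ‖a‖ := norm_pos_iff.2 ha
    have hnc : (0:ℝ) < ‖c‖ := norm_pos_iff.2 hc
    set r : ℝ := Real.sqrt (‖c‖ / ‖a‖) with hrdef
    have hr : 0 < r := Real.sqrt_pos.2 (by positivity)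
    have hr2 : r ^ 2 = ‖c‖ / ‖a‖ := Real.sq_sqrt (by positivity)
    have hkey : ⟪r • a, T (r⁻¹ • c)⟫ = ⟪a, T c⟫ := by
      rw [map_smul, real_inner_smul_left, real_inner_smul_right]
      field_simp
    have h2 := hbil0 (r • a) (r⁻¹ • c)
    rw [hkey] at h2
    have hn1 : ‖r • a‖ = r * ‖a‖ := by
      rw [norm_smul, Real.norm_eq_abs, abs_of_pos hr]
    have hn2 : ‖r⁻¹ • c‖ = r⁻¹ * ‖c‖ := by
      rw [norm_smul, Real.norm_eq_abs, abs_of_pos (inv_pos.2 hr)]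
    rw [hn1, hn2] at h2
    have hrr : (r * ‖a‖) ^ 2 = ‖c‖ * ‖a‖ := by
      rw [mul_pow, hr2]
      field_simp
    have hrr2 : (r⁻¹ * ‖c‖) ^ 2 = ‖a‖ * ‖c‖ := by
      rw [mul_pow, inv_pow, hr2]
      field_simp
    rw [hrr, hrr2] at h2
    calc |⟪a, T c⟫| ≤ C / 2 * (‖c‖ * ‖a‖ + ‖a‖ * ‖c‖) := h2
      _ = C * (‖a‖ * ‖c‖) := by ring
  -- conclude
  have hfinal : matrixOpNorm Mx ≤ C := by
    rw [matrixOpNorm, ← hTdef]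
    refine ContinuousLinearMap.opNorm_le_bound _ hCnn ?_
    intro u
    by_cases hTu : T u = 0
    · rw [hTu]
      simp only [norm_zero]
      positivity
    · have h5 : (0:ℝ) < ‖T u‖ := norm_pos_iff.2 hTu
      have h2 : ‖T u‖ ^ 2 = ⟪T u, T u⟫ := (real_inner_self_eq_norm_sq _).symm
      have h3 := hbil (T u) u
      have h4 : ‖T u‖ ^ 2 ≤ C * (‖T u‖ * ‖u‖) := by
        rw [h2]
        exact (le_abs_self _).trans h3
      nlinarith [h4, h5]
  rw [hCdef] at hfinal
  exact hfinal
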